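/- Let α, ε, γ > 0, let A be a real symmetric positive semidefinite N×N matrix with positive semidefinite square root S, and suppose vᵀ A v ≥ γ ‖v‖² for every v in the range of A. Suppose x_1, x_2, g_1, g_2, w_1, w_2 ∈ ℝ^N satisfy g_1 + S w_1 = 0 and g_2 + S w_2 = 0 with w_1, w_2 in the range of A. Then ‖(x_1 − x_2, w_1 − w_2)‖_G ≤ ‖x_1 − x_2‖ + (√(αε)/√γ) ‖g_1 − g_2‖. -/

import Mathlib

open Matrix RealInnerProductSpace

/-- The G-norm of a primal-dual pair `(x, v)`: `‖(x,v)‖_G = (‖x‖² + αε‖v‖²)^{1/2}`. -/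
noncomputable def GNorm (α ε : ℝ) {N : ℕ} (x v : EuclideanSpace ℝ (Fin N)) : ℝ :=
  Real.sqrt (‖x‖ ^ 2 + α * ε * ‖v‖ ^ 2)

/-- Bound on the G-norm drift of optimal primal-dual pairs:
`‖(x₁ − x₂, w₁ − w₂)‖_G ≤ ‖x₁ − x₂‖ + (√(αε)/√γ) ‖g₁ − g₂‖` under the KKT conditions
`gᵢ + S wᵢ = 0` with `wᵢ` in the range of `A = S²`. -/
theorem stmt12 {N : ℕ} (α ε γ : ℝ) (hα : 0 < α) (hε : 0 < ε) (hγ : 0 < γ)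
    (A S : Matrix (Fin N) (Fin N) ℝ)
    (hA : A.PosSemidef) (hS : S.PosSemidef) (hSS : S * S = A)
    (hquad : ∀ v : EuclideanSpace ℝ (Fin N),
      (∃ w, Matrix.toEuclideanCLM (𝕜 := ℝ) A w = v) →
      γ * ‖v‖ ^ 2 ≤ ⟪v, Matrix.toEuclideanCLM (𝕜 := ℝ) A v⟫)
    (x₁ x₂ g₁ g₂ w₁ w₂ : EuclideanSpace ℝ (Fin N))
    (h₁ : g₁ + Matrix.toEuclideanCLM (𝕜 := ℝ) S w₁ = 0)
    (h₂ : g₂ + Matrix.toEuclideanCLM (𝕜 := ℝ) S w₂ = 0)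
    (hw₁ : ∃ u, Matrix.toEuclideanCLM (𝕜 := ℝ) A u = w₁)
    (hw₂ : ∃ u, Matrix.toEuclideanCLM (𝕜 := ℝ) A u = w₂) :
    GNorm α ε (x₁ - x₂) (w₁ - w₂) ≤
      ‖x₁ - x₂‖ + (Real.sqrt (α * ε) / Real.sqrt γ) * ‖g₁ - g₂‖ := by
  set T := Matrix.toEuclideanCLM (𝕜 := ℝ) S with hT
  set w := w₁ - w₂
  set g := g₁ - g₂
  -- T w = -(g₁ - g₂)
  have hTw : T w = -g := by
    have e1 : T w₁ = -g₁ := eq_neg_of_add_eq_zero_right h₁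
    have e2 : T w₂ = -g₂ := eq_neg_of_add_eq_zero_right h₂
    simp [w, g, map_sub, e1, e2]; abel
  -- self-adjointness step: ⟪w, A w⟫ = ‖T w‖²
  have hstar : star T = T := by
    rw [hT, ← map_star]; congr 1; exact hS.1
  have hAw : ⟪w, Matrix.toEuclideanCLM (𝕜 := ℝ) A w⟫ = ‖T w‖ ^ 2 := by
    have h1 : Matrix.toEuclideanCLM (𝕜 := ℝ) A w = T (T w) := by
      rw [← hSS, _root_.map_mul]; rfl
    calc ⟪w, Matrix.toEuclideanCLM (𝕜 := ℝ) A w⟫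
        = ⟪w, (ContinuousLinearMap.adjoint T) (T w)⟫ := by
          rw [h1, ← ContinuousLinearMap.star_eq_adjoint, hstar]
      _ = ⟪T w, T w⟫ := ContinuousLinearMap.adjoint_inner_right T _ _
      _ = ‖T w‖ ^ 2 := real_inner_self_eq_norm_sq _
  -- w is in the range of A
  obtain ⟨u₁, hu₁⟩ := hw₁
  obtain ⟨u₂, hu₂⟩ := hw₂
  have hwr : ∃ u, Matrix.toEuclideanCLM (𝕜 := ℝ) A u = w :=
    ⟨u₁ - u₂, by rw [map_sub, hu₁, hu₂]⟩
  -- key quadratic bound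
  have hkey : γ * ‖w‖ ^ 2 ≤ ‖g‖ ^ 2 := by
    have := hquad w hwr
    rwa [hAw, hTw, norm_neg] at this
  -- conclude
  have hb : (0:ℝ) ≤ Real.sqrt (α * ε) / Real.sqrt γ * ‖g‖ :=
    mul_nonneg (div_nonneg (Real.sqrt_nonneg _) (Real.sqrt_nonneg _)) (norm_nonneg _)
  have hsq : (Real.sqrt (α * ε) / Real.sqrt γ * ‖g‖) ^ 2 = (α * ε / γ) * ‖g‖ ^ 2 := by
    rw [mul_pow, div_pow, Real.sq_sqrt (by positivity), Real.sq_sqrt hγ.le]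
  have hle : ‖x₁ - x₂‖ ^ 2 + α * ε * ‖w‖ ^ 2 ≤
      (‖x₁ - x₂‖ + Real.sqrt (α * ε) / Real.sqrt γ * ‖g‖) ^ 2 := by
    have h3 : α * ε * ‖w‖ ^ 2 ≤ (α * ε / γ) * ‖g‖ ^ 2 := by
      rw [div_mul_eq_mul_div, le_div_iff₀ hγ]
      nlinarith [hkey, mul_pos hα hε]
    nlinarith [mul_nonneg (norm_nonneg (x₁ - x₂)) hb]
  calc GNorm α ε (x₁ - x₂) w
      ≤ Real.sqrt ((‖x₁ - x₂‖ + Real.sqrt (α * ε) / Real.sqrt γ * ‖g‖) ^ 2) :=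
        Real.sqrt_le_sqrt hle
    _ = ‖x₁ - x₂‖ + Real.sqrt (α * ε) / Real.sqrt γ * ‖g‖ :=
        Real.sqrt_sq (by positivity)
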